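/- The map a(μ) = μ + √(μ+1)·√(μ-1), restricted to ℂ \ [-1,1], is a bijection onto {z ∈ ℂ : |z| > 1}, with holomorphic inverse given by z ↦ (z + 1/z)/2. -/

import Mathlib

noncomputable def csqrt (z : ℂ) : ℂ := z ^ (1/2 : ℂ)

noncomputable def amap (μ : ℂ) : ℂ := μ + csqrt (μ + 1) * csqrt (μ - 1)

def seg : Set ℂ := {z : ℂ | ∃ x : ℝ, -1 ≤ x ∧ x ≤ 1 ∧ z = (x : ℂ)}

noncomputable def joukowski (z : ℂ) : ℂ := (z + 1 / z) / 2

open Complex Real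

lemma ne_zero_of_one_lt_abs {z : ℂ} (h : 1 < ‖z‖) : z ≠ 0 := by
  intro h0
  rw [h0, norm_zero] at h
  linarith

lemma csqrt_sq (w : ℂ) : csqrt w ^ 2 = w := by
  have h : (1/2 : ℂ) = (((2:ℕ) : ℂ))⁻¹ := by norm_num
  rw [csqrt, h]
  exact Complex.cpow_nat_inv_pow w two_ne_zero

lemma csqrt_re_eq (w : ℂ) (hw : w ≠ 0) :
    (csqrt w).re = Real.exp ((Complex.log w).re / 2) * Real.cos (Complex.arg w / 2) := by
  rw [csqrt, Complex.cpow_def_of_ne_zero hw, Complex.exp_re]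
  simp [Complex.mul_re, Complex.mul_im, Complex.log_im]
  ring_nf

lemma csqrt_im_eq (w : ℂ) (hw : w ≠ 0) :
    (csqrt w).im = Real.exp ((Complex.log w).re / 2) * Real.sin (Complex.arg w / 2) := by
  rw [csqrt, Complex.cpow_def_of_ne_zero hw, Complex.exp_im]
  simp [Complex.mul_re, Complex.mul_im, Complex.log_im]
  ring_nf

lemma csqrt_re_nonneg (w : ℂ) : 0 ≤ (csqrt w).re := by
  rcases eq_or_ne w 0 with h | h
  · simp [csqrt, h, Complex.zero_cpow (by norm_num : (1/2 : ℂ) ≠ 0)]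
  rw [csqrt_re_eq w h]
  refine mul_nonneg (Real.exp_pos _).le (Real.cos_nonneg_of_mem_Icc ⟨?_, ?_⟩)
  · linarith [Complex.neg_pi_lt_arg w]
  · linarith [Complex.arg_le_pi w]

lemma csqrt_im_nonneg (w : ℂ) (h : 0 ≤ w.im) : 0 ≤ (csqrt w).im := by
  rcases eq_or_ne w 0 with h0 | h0
  · simp [csqrt, h0, Complex.zero_cpow (by norm_num : (1/2 : ℂ) ≠ 0)]
  rw [csqrt_im_eq w h0]
  have harg : 0 ≤ Complex.arg w := Complex.arg_nonneg_iff.2 h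
  refine mul_nonneg (Real.exp_pos _).le (Real.sin_nonneg_of_nonneg_of_le_pi (by linarith) ?_)
  have := Complex.arg_le_pi w
  have := Real.pi_pos
  linarith

lemma csqrt_im_nonpos (w : ℂ) (h : w.im < 0) : (csqrt w).im ≤ 0 := by
  have h0 : w ≠ 0 := by
    intro hh; rw [hh] at h; simp at h
  rw [csqrt_im_eq w h0]
  have harg : Complex.arg w < 0 := Complex.arg_neg_iff.2 h
  refine mul_nonpos_of_nonneg_of_nonpos (Real.exp_pos _).le ?_
  apply Real.sin_nonpos_of_nonpos_of_neg_pi_le (by linarith)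
  have := Complex.neg_pi_lt_arg w
  linarith

lemma key_ineq (μ : ℂ) :
    0 ≤ (csqrt (μ+1)).re * (csqrt (μ-1)).re + (csqrt (μ+1)).im * (csqrt (μ-1)).im := by
  have h1 : (μ + 1).im = μ.im := by simp
  have h2 : (μ - 1).im = μ.im := by simp
  rcases le_or_gt 0 μ.im with h | h
  · exact add_nonneg
      (mul_nonneg (csqrt_re_nonneg _) (csqrt_re_nonneg _))
      (mul_nonneg (csqrt_im_nonneg _ (h1 ▸ h)) (csqrt_im_nonneg _ (h2 ▸ h)))
  · refine add_nonneg (mul_nonneg (csqrt_re_nonneg _) (csqrt_re_nonneg _)) ?_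
    have a1 := csqrt_im_nonpos _ (h1 ▸ h)
    have a2 := csqrt_im_nonpos _ (h2 ▸ h)
    nlinarith

lemma amap_mul (μ : ℂ) :
    amap μ * (μ - csqrt (μ + 1) * csqrt (μ - 1)) = 1 := by
  have hp : csqrt (μ+1) ^ 2 = μ + 1 := csqrt_sq _
  have hq : csqrt (μ-1) ^ 2 = μ - 1 := csqrt_sq _
  unfold amap
  linear_combination (-(csqrt (μ-1))^2) * hp - (μ+1) * hq

lemma jouk_amap (μ : ℂ) : joukowski (amap μ) = μ := by
  have hmul := amap_mul μ
  have hmul' : (μ - csqrt (μ + 1) * csqrt (μ - 1)) * amap μ = 1 := by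
    rw [mul_comm]; exact hmul
  have hinv : 1 / amap μ = μ - csqrt (μ + 1) * csqrt (μ - 1) :=
    (eq_one_div_of_mul_eq_one_left hmul').symm
  rw [joukowski, hinv, show amap μ = μ + csqrt (μ+1) * csqrt (μ-1) from rfl]
  ring

lemma abs_one_jouk_mem {z : ℂ} (hz : ‖z‖ = 1) : joukowski z ∈ seg := by
  have h1 : (starRingEnd ℂ) z * z = 1 := by
    rw [mul_comm, Complex.mul_conj]
    norm_cast
    rw [Complex.normSq_eq_norm_sq, hz]; norm_num
  have hinv : 1 / z = (starRingEnd ℂ) z := (eq_one_div_of_mul_eq_one_left h1).symm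
  have h2 : |z.re| ≤ 1 := hz ▸ Complex.abs_re_le_norm z
  refine ⟨z.re, (abs_le.1 h2).1, (abs_le.1 h2).2, ?_⟩
  rw [joukowski, hinv, Complex.add_conj]
  push_cast
  ring

lemma amap_mem {μ : ℂ} (hμ : μ ∉ seg) : 1 < ‖amap μ‖ := by
  set p := csqrt (μ + 1) with hpdef
  set q := csqrt (μ - 1) with hqdef
  have hp : p ^ 2 = μ + 1 := csqrt_sq _
  have hq : q ^ 2 = μ - 1 := csqrt_sq _
  have hμ2 : (2:ℂ) * μ = p^2 + q^2 := by rw [hp, hq]; ring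
  have hmul := amap_mul μ
  have h1 : Complex.normSq (amap μ) * Complex.normSq (μ - p * q) = 1 := by
    rw [← map_mul, hmul]; simp
  have hre' : 0 ≤ (μ * (starRingEnd ℂ) (p * q)).re := by
    have e : (2:ℂ) * (μ * (starRingEnd ℂ) (p*q)) = (p^2+q^2) * (starRingEnd ℂ) (p*q) := by
      rw [← hμ2]; ring
    have e2 := congrArg Complex.re e
    have e3 : ((2:ℂ) * (μ * (starRingEnd ℂ) (p*q))).re = 2 * (μ * (starRingEnd ℂ) (p*q)).re := by
      simp [Complex.mul_re]
    have e4 : ((p^2+q^2) * (starRingEnd ℂ) (p*q)).re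
        = (p.re^2 + p.im^2 + q.re^2 + q.im^2) * (p.re*q.re + p.im*q.im) := by
      simp [Complex.mul_re, Complex.mul_im, pow_two]
      ring
    have e5 : (0:ℝ) ≤ (p.re^2 + p.im^2 + q.re^2 + q.im^2) * (p.re*q.re + p.im*q.im) :=
      mul_nonneg (by positivity) (key_ineq μ)
    rw [e3, e4] at e2
    linarith
  have h2 : Complex.normSq (μ - p * q) ≤ Complex.normSq (amap μ) := by
    have e1 : Complex.normSq (amap μ) =
        Complex.normSq μ + Complex.normSq (p * q) + 2 * (μ * (starRingEnd ℂ) (p*q)).re := by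
      rw [show amap μ = μ + p * q from rfl]
      exact Complex.normSq_add μ (p*q)
    have e2 := Complex.normSq_sub μ (p*q)
    rw [e1, e2]; linarith
  have h3 : 1 ≤ Complex.normSq (amap μ) := by
    nlinarith [Complex.normSq_nonneg (μ - p * q), Complex.normSq_nonneg (amap μ)]
  have h4 : 1 ≤ ‖amap μ‖ := by
    have := Complex.sq_norm (amap μ)
    nlinarith [norm_nonneg (amap μ)]
  rcases lt_or_eq_of_le h4 with h | h
  · exact h
  · exfalso
    apply hμ
    rw [← jouk_amap μ]
    exact abs_one_jouk_mem h.symm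

lemma jouk_not_mem {z : ℂ} (hz : 1 < ‖z‖) : joukowski z ∉ seg := by
  rintro ⟨x, hx1, hx2, hx⟩
  have hz0 : z ≠ 0 := ne_zero_of_one_lt_abs hz
  have hns : 1 < Complex.normSq z := by
    have := Complex.sq_norm z
    nlinarith
  have heq : z + 1 / z = 2 * (x : ℂ) := by
    rw [joukowski, div_eq_iff (two_ne_zero' ℂ)] at hx
    linear_combination hx
  have him : z.im + (z⁻¹).im = 0 := by
    have := congrArg Complex.im heq
    simpa [one_div] using this
  have hns0 : Complex.normSq z ≠ 0 := by positivity
  have him0 : z.im = 0 := by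
    rw [Complex.inv_im] at him
    have h2 : z.im * (Complex.normSq z - 1) = 0 := by
      field_simp at him
      linear_combination him
    rcases mul_eq_zero.1 h2 with h | h
    · exact h
    · exfalso; have := sub_eq_zero.1 h; rw [this] at hns; linarith
  have hre : z.re + (z⁻¹).re = 2 * x := by
    have := congrArg Complex.re heq
    simpa [one_div] using this
  rw [Complex.inv_re] at hre
  have hnsr : Complex.normSq z = z.re ^ 2 := by
    rw [Complex.normSq_apply, him0]; ring
  rw [hnsr] at hre hns hns0
  have hr0 : z.re ≠ 0 := by
    intro h; rw [h] at hns; norm_num at hns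
  have hre2 : z.re * (z.re^2 + 1 - 2*x*z.re) = 0 := by
    field_simp at hre
    linear_combination z.re * hre
  have hre' : z.re^2 + 1 = 2*x*z.re := by
    rcases mul_eq_zero.1 hre2 with h | h
    · exact absurd h hr0
    · linarith
  rcases le_or_gt z.re 0 with hsgn | hsgn
  · have hxr : (x + 1) * z.re ≤ 0 :=
      mul_nonpos_of_nonneg_of_nonpos (by linarith) hsgn
    have hle : (z.re + 1)^2 ≤ 0 := by nlinarith
    have h0 : (z.re + 1)^2 = 0 := le_antisymm hle (sq_nonneg _)
    have : z.re = -1 := by nlinarith [sq_nonneg (z.re + 1)]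
    rw [this] at hns; norm_num at hns
  · have hxr : (1 - x) * z.re ≥ 0 :=
      mul_nonneg (by linarith) hsgn.le
    have hle : (z.re - 1)^2 ≤ 0 := by nlinarith
    have h0 : (z.re - 1)^2 = 0 := le_antisymm hle (sq_nonneg _)
    have : z.re = 1 := by nlinarith [sq_nonneg (z.re - 1)]
    rw [this] at hns; norm_num at hns

lemma jouk_inj : Set.InjOn joukowski {z : ℂ | 1 < ‖z‖} := by
  intro z hz w hw h
  simp only [Set.mem_setOf_eq] at hz hw
  have hz0 : z ≠ 0 := ne_zero_of_one_lt_abs hz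
  have hw0 : w ≠ 0 := ne_zero_of_one_lt_abs hw
  rw [joukowski, joukowski] at h
  have h2 : (z - w) * (z * w - 1) = 0 := by
    field_simp at h
    linear_combination h
  rcases mul_eq_zero.1 h2 with h3 | h3
  · exact sub_eq_zero.1 h3
  · exfalso
    have hzw : z * w = 1 := sub_eq_zero.1 h3
    have habs : ‖z‖ * ‖w‖ = 1 := by
      rw [← norm_mul, hzw]; simp
    nlinarith

theorem stmt0 :
    Set.BijOn amap segᶜ {z : ℂ | 1 < ‖z‖} ∧
    Set.InvOn joukowski amap segᶜ {z : ℂ | 1 < ‖z‖} ∧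
    DifferentiableOn ℂ joukowski {z : ℂ | 1 < ‖z‖} := by
  have hB : Set.MapsTo amap segᶜ {z : ℂ | 1 < ‖z‖} := fun μ hμ => amap_mem hμ
  have hC : Set.MapsTo joukowski {z : ℂ | 1 < ‖z‖} segᶜ := fun z hz => jouk_not_mem hz
  have hInv : Set.InvOn joukowski amap segᶜ {z : ℂ | 1 < ‖z‖} := by
    constructor
    · intro μ _; exact jouk_amap μ
    · intro z hz
      exact jouk_inj (hB (hC hz)) hz (jouk_amap (joukowski z))
  refine ⟨hInv.bijOn hB hC, hInv, ?_⟩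
  intro z hz
  have hz0 : z ≠ 0 := ne_zero_of_one_lt_abs hz
  apply DifferentiableAt.differentiableWithinAt
  have : DifferentiableAt ℂ (fun z : ℂ => (z + 1 / z) / 2) z := by
    apply DifferentiableAt.div_const
    exact differentiableAt_id.add ((differentiableAt_const 1).div differentiableAt_id hz0)
  exact this
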